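/- For every β ∈ (0,1), the map G : ℝ^{𝒜×𝒳} → ℝ^{𝒜×𝒳} with components G_{a|x}(q) = β q_{a|x} + (1−β) H_{a|x}(q) satisfies, at every q ∈ ℝ^{𝒜×𝒳} and for every component (ã,x̃), Σ_{a',x'} | ∂G_{ã|x̃}/∂q_{a'|x'} | < 1; equivalently, the ℓ∞-operator norm of the Jacobian of G is strictly less than 1 at every point. -/

import Mathlib

open Finset

noncomputable section

/-- A probability mass function on a finite alphabet. -/
def IsPMF {α : Type} [Fintype α] (p : α → ℝ) : Prop :=
  (∀ a, 0 ≤ p a) ∧ ∑ a, p a = 1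

variable {X Y A : Type} [Fintype X] [Fintype Y] [Fintype A]
  [DecidableEq X] [DecidableEq Y] [DecidableEq A]

/-- The map `H_{a|x}(q) = log₂( 2^{μ_x} α_{a,x} /
Π_y [ Σ_x̃ P_X(x̃) P_{Y|X,A}(y|x̃,a) 2^{q_{a|x̃}} ]^{P_{Y|X,A}(y|x,a)} )`. -/
def Hfun (PX : X → ℝ) (PW : A → X → Y → ℝ) (μ : X → ℝ) (α : A → X → ℝ)
    (q : A × X → ℝ) (a : A) (x : X) : ℝ :=
  Real.logb 2 ((2 : ℝ) ^ (μ x) * α a x /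
    ∏ y, (∑ xt, PX xt * PW a xt y * (2 : ℝ) ^ (q (a, xt))) ^ (PW a x y))

/-- The claimed partial derivative `∂H_{ã|x̃}/∂q_{a'|x'}`. -/
def Hpd (PX : X → ℝ) (PW : A → X → Y → ℝ) (q : A × X → ℝ)
    (at' : A) (xt' : X) (a' : A) (x' : X) : ℝ :=
  -(if at' = a' then (1 : ℝ) else 0) * ∑ y, PW at' xt' y *
    (PX x' * PW a' x' y * (2 : ℝ) ^ (q (a', x')) /
      (∑ x, PX x * PW at' x y * (2 : ℝ) ^ (q (at', x))))
/-- The map `G : ℝ^{A×X} → ℝ^{A×X}` with components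
`G_{a|x}(q) = β q_{a|x} + (1−β) H_{a|x}(q)`. -/
def Gmap (PX : X → ℝ) (PW : A → X → Y → ℝ) (μ : X → ℝ) (α : A → X → ℝ) (β : ℝ)
    (q : A × X → ℝ) : A × X → ℝ :=
  fun p => β * q p + (1 - β) * Hfun PX PW μ α q p.1 p.2

/-- The claimed partial derivative `∂G_{ã|x̃}/∂q_{a'|x'}`. -/
def Gpd (PX : X → ℝ) (PW : A → X → Y → ℝ) (β : ℝ) (q : A × X → ℝ)
    (at' : A) (xt' : X) (a' : A) (x' : X) : ℝ :=
  β * (if (at', xt') = (a', x') then (1 : ℝ) else 0) +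
    (1 - β) * Hpd PX PW q at' xt' a' x'
def Sfun (PX : X → ℝ) (PW : A → X → Y → ℝ) (q : A × X → ℝ) (a : A) (y : Y) : ℝ :=
  ∑ x, PX x * PW a x y * (2 : ℝ) ^ (q (a, x))

lemma Sfun_nonneg (PX : X → ℝ) (PW : A → X → Y → ℝ) (q : A × X → ℝ) (a : A) (y : Y)
    (hPXnn : ∀ x, 0 ≤ PX x) (hPWnn : ∀ x, 0 ≤ PW a x y) : 0 ≤ Sfun PX PW q a y := by
  apply Finset.sum_nonneg
  intro x _
  exact mul_nonneg (mul_nonneg (hPXnn x) (hPWnn x))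
    (Real.rpow_pos_of_pos (by norm_num) (q (a, x))).le

lemma Sfun_eq_zero (PX : X → ℝ) (PW : A → X → Y → ℝ) (q : A × X → ℝ) (a : A) (y : Y)
    (hPXpos : ∀ x, 0 < PX x) (hPWnn : ∀ x, 0 ≤ PW a x y) (h : Sfun PX PW q a y = 0) :
    ∀ x, PW a x y = 0 := by
  intro x
  have h2 : (0:ℝ) < (2:ℝ) ^ (q (a, x)) := Real.rpow_pos_of_pos (by norm_num) _
  have hall := (Finset.sum_eq_zero_iff_of_nonneg (fun x _ => by
    have := Real.rpow_pos_of_pos (by norm_num : (0:ℝ) < 2) (q (a, x))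
    have := hPXpos x
    have := hPWnn x
    positivity)).mp h x (mem_univ x)
  have hx := (hPXpos x).ne'
  rcases mul_eq_zero.mp hall with h' | h'
  · rcases mul_eq_zero.mp h' with h'' | h''
    · exact absurd h'' hx
    · exact h''
  · exact absurd h' h2.ne'

lemma Hfun_eq (PX : X → ℝ) (PW : A → X → Y → ℝ) (μ : X → ℝ) (α : A → X → ℝ)
    (q : A × X → ℝ) (a : A) (x : X)
    (hPXpos : ∀ x, 0 < PX x) (hPWnn : ∀ x' y, 0 ≤ PW a x' y) (hα : 0 < α a x) :
    Hfun PX PW μ α q a x = Real.logb 2 ((2:ℝ) ^ (μ x) * α a x) -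
      ∑ y, PW a x y * Real.logb 2 (Sfun PX PW q a y) := by
  have hnum : (0:ℝ) < (2:ℝ) ^ (μ x) * α a x := by
    have := Real.rpow_pos_of_pos (by norm_num : (0:ℝ) < 2) (μ x)
    positivity
  have hfac : ∀ y : Y, Sfun PX PW q a y ^ (PW a x y) ≠ 0 := by
    intro y
    rcases (Sfun_nonneg PX PW q a y (fun x => (hPXpos x).le) (fun x' => hPWnn x' y)).eq_or_lt with h | h
    · rw [← h, Sfun_eq_zero PX PW q a y hPXpos (fun x' => hPWnn x' y) h.symm x, Real.rpow_zero]
      norm_num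
    · exact (Real.rpow_pos_of_pos h _).ne'
  rw [Hfun]
  show Real.logb 2 ((2:ℝ) ^ (μ x) * α a x / ∏ y, (Sfun PX PW q a y) ^ (PW a x y)) = _
  rw [Real.logb_div hnum.ne' (Finset.prod_ne_zero_iff.mpr (fun y _ => hfac y)),
    Real.logb_prod _ _ (fun y _ => hfac y)]
  congr 1
  apply Finset.sum_congr rfl
  intro y _
  rcases (Sfun_nonneg PX PW q a y (fun x => (hPXpos x).le) (fun x' => hPWnn x' y)).eq_or_lt with h | h
  · rw [← h, Sfun_eq_zero PX PW q a y hPXpos (fun x' => hPWnn x' y) h.symm x, Real.rpow_zero]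
    simp
  · exact Real.logb_rpow_eq_mul_logb_of_pos h

lemma hasDerivAt_Hfun_update (PX : X → ℝ) (PW : A → X → Y → ℝ) (μ : X → ℝ) (α : A → X → ℝ)
    (q : A × X → ℝ) (at' : A) (xt' : X) (x' : X)
    (hPXpos : ∀ x, 0 < PX x) (hPWnn : ∀ x y, 0 ≤ PW at' x y) (hα : ∀ a x, 0 < α a x) :
    HasDerivAt (fun u => Hfun PX PW μ α (Function.update q (at', x') u) at' xt')
      (-(∑ y, PW at' xt' y *
        (PX x' * PW at' x' y * (2:ℝ) ^ (q (at', x')) / Sfun PX PW q at' y)))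
      (q (at', x')) := by
  set u₀ := q (at', x') with hu₀
  set k : Y → ℝ := fun y => PX x' * PW at' x' y with hk
  set T : Y → ℝ := fun y => ∑ xt ∈ univ.erase x', PX xt * PW at' xt y * (2:ℝ) ^ (q (at', xt))
    with hT
  have hSrepr : ∀ y, Sfun PX PW q at' y = k y * (2:ℝ) ^ u₀ + T y := by
    intro y
    rw [Sfun, ← Finset.add_sum_erase univ _ (mem_univ x')]
  have hupdate : ∀ (u : ℝ) (y : Y),
      (∑ xt, PX xt * PW at' xt y * (2:ℝ) ^ (Function.update q (at', x') u (at', xt)))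
        = k y * (2:ℝ) ^ u + T y := by
    intro u y
    rw [← Finset.add_sum_erase univ _ (mem_univ x')]
    congr 1
    · rw [Function.update_self]
    · apply Finset.sum_congr rfl
      intro xt hxt
      rw [Function.update_of_ne (by
        simp only [ne_eq, Prod.mk.injEq, true_and]
        exact (Finset.mem_erase.mp hxt).1)]
  have hlog2 : Real.log 2 ≠ 0 := (Real.log_pos (by norm_num)).ne'
  have hterm : ∀ y : Y, HasDerivAt
      (fun u : ℝ => PW at' xt' y * Real.logb 2 (k y * (2:ℝ) ^ u + T y))
      (PW at' xt' y * (PX x' * PW at' x' y * (2:ℝ) ^ u₀ / Sfun PX PW q at' y)) u₀ := by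
    intro y
    rcases (Sfun_nonneg PX PW q at' y (fun x => (hPXpos x).le) (fun x => hPWnn x y)).eq_or_lt
      with hS0 | hSpos
    · -- S = 0 : everything vanishes
      have hall := Sfun_eq_zero PX PW q at' y hPXpos (fun x => hPWnn x y) hS0.symm
      have hky : k y = 0 := by rw [hk]; simp [hall x']
      have hTy : T y = 0 := by
        rw [hT]
        apply Finset.sum_eq_zero
        intro xt _
        simp [hall xt]
      have : (fun u : ℝ => PW at' xt' y * Real.logb 2 (k y * (2:ℝ) ^ u + T y))
          = fun _ => PW at' xt' y * Real.logb 2 0 := by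
        funext u; rw [hky, hTy]; ring_nf
      rw [this, ← hS0, hall x']
      simpa using hasDerivAt_const u₀ (PW at' xt' y * Real.logb 2 0)
    · have hinner : HasDerivAt (fun u : ℝ => k y * (2:ℝ) ^ u + T y)
          (k y * ((2:ℝ) ^ u₀ * Real.log 2)) u₀ :=
        ((Real.hasStrictDerivAt_const_rpow (by norm_num : (0:ℝ) < 2) u₀).hasDerivAt.const_mul
          (k y)).add_const (T y)
      have hne : k y * (2:ℝ) ^ u₀ + T y ≠ 0 := by rw [← hSrepr]; exact hSpos.ne'
      have hlog := (hinner.log hne).div_const (Real.log 2)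
      have hfin := hlog.const_mul (PW at' xt' y)
      have heq : (fun u : ℝ => PW at' xt' y * Real.logb 2 (k y * (2:ℝ) ^ u + T y))
          = fun u : ℝ => PW at' xt' y * (Real.log (k y * (2:ℝ) ^ u + T y) / Real.log 2) := by
        funext u; rw [Real.log_div_log]
      rw [heq]
      refine hfin.congr_deriv ?_
      rw [← hSrepr y, hk]
      field_simp
  have hsum := HasDerivAt.sum (fun y (_ : y ∈ (univ : Finset Y)) => hterm y)
  have hconst := hsum.const_sub (Real.logb 2 ((2:ℝ) ^ (μ xt') * α at' xt'))
  have hfunx : (fun u => Hfun PX PW μ α (Function.update q (at', x') u) at' xt')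
      = fun u => Real.logb 2 ((2:ℝ) ^ (μ xt') * α at' xt') -
          ∑ y, PW at' xt' y * Real.logb 2 (k y * (2:ℝ) ^ u + T y) := by
    funext u
    rw [Hfun_eq PX PW μ α (Function.update q (at', x') u) at' xt' hPXpos hPWnn (hα at' xt')]
    congr 1
    apply Finset.sum_congr rfl
    intro y _
    rw [Sfun, hupdate u y]
  rw [hfunx]
  simpa using hconst

def cfun (PX : X → ℝ) (PW : A → X → Y → ℝ) (q : A × X → ℝ) (at' : A) (xt' : X)
    (x'' : X) : ℝ :=
  ∑ y, PW at' xt' y * (PX x'' * PW at' x'' y * (2:ℝ) ^ (q (at', x'')) / Sfun PX PW q at' y)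

lemma cfun_nonneg (PX : X → ℝ) (PW : A → X → Y → ℝ) (q : A × X → ℝ) (at' : A) (xt' : X)
    (x'' : X) (hPXpos : ∀ x, 0 < PX x) (hPWnn : ∀ x y, 0 ≤ PW at' x y) :
    0 ≤ cfun PX PW q at' xt' x'' := by
  apply Finset.sum_nonneg
  intro y _
  apply mul_nonneg (hPWnn xt' y)
  apply div_nonneg
  · exact mul_nonneg (mul_nonneg (hPXpos x'').le (hPWnn x'' y))
      (Real.rpow_pos_of_pos (by norm_num) _).le
  · exact Sfun_nonneg PX PW q at' y (fun x => (hPXpos x).le) (fun x => hPWnn x y)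

lemma cfun_sum_le_one (PX : X → ℝ) (PW : A → X → Y → ℝ) (q : A × X → ℝ) (at' : A) (xt' : X)
    (hPXpos : ∀ x, 0 < PX x) (hPW : ∀ a x, IsPMF (PW a x)) :
    ∑ x'', cfun PX PW q at' xt' x'' ≤ 1 := by
  have hPWnn : ∀ x y, 0 ≤ PW at' x y := fun x y => (hPW at' x).1 y
  have key : ∀ y, (∑ x'', PX x'' * PW at' x'' y * (2:ℝ) ^ (q (at', x'')) / Sfun PX PW q at' y)
      ≤ 1 := by
    intro y
    rw [← Finset.sum_div]
    rw [show (∑ x'', PX x'' * PW at' x'' y * (2:ℝ) ^ (q (at', x''))) = Sfun PX PW q at' y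
      from rfl]
    exact div_self_le_one _
  calc ∑ x'', cfun PX PW q at' xt' x''
      = ∑ y, PW at' xt' y *
          (∑ x'', PX x'' * PW at' x'' y * (2:ℝ) ^ (q (at', x'')) / Sfun PX PW q at' y) := by
        simp only [cfun]
        rw [Finset.sum_comm]
        exact Finset.sum_congr rfl fun y _ => (Finset.mul_sum _ _ _).symm
    _ ≤ ∑ y, PW at' xt' y * 1 := by
        apply Finset.sum_le_sum
        intro y _
        exact mul_le_mul_of_nonneg_left (key y) (hPWnn xt' y)
    _ = 1 := by simp [(hPW at' xt').2]

lemma cfun_pos (PX : X → ℝ) (PW : A → X → Y → ℝ) (q : A × X → ℝ) (at' : A) (xt' : X)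
    (hPXpos : ∀ x, 0 < PX x) (hPW : ∀ a x, IsPMF (PW a x)) :
    0 < cfun PX PW q at' xt' xt' := by
  have hPWnn : ∀ x y, 0 ≤ PW at' x y := fun x y => (hPW at' x).1 y
  obtain ⟨y0, hy0⟩ : ∃ y, 0 < PW at' xt' y := by
    by_contra h
    push_neg at h
    have hz : ∑ y, PW at' xt' y = 0 :=
      Finset.sum_eq_zero fun y _ => le_antisymm (h y) (hPWnn xt' y)
    rw [(hPW at' xt').2] at hz
    norm_num at hz
  have h2 : (0:ℝ) < (2:ℝ) ^ (q (at', xt')) := Real.rpow_pos_of_pos (by norm_num) _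
  have htm : 0 < PX xt' * PW at' xt' y0 * (2:ℝ) ^ (q (at', xt')) :=
    mul_pos (mul_pos (hPXpos xt') hy0) h2
  have hDpos : 0 < Sfun PX PW q at' y0 := by
    refine lt_of_lt_of_le htm ?_
    apply Finset.single_le_sum (f := fun x => PX x * PW at' x y0 * (2:ℝ) ^ (q (at', x)))
      (fun x _ => mul_nonneg (mul_nonneg (hPXpos x).le (hPWnn x y0))
        (Real.rpow_pos_of_pos (by norm_num) _).le) (mem_univ xt')
  have hterm : 0 < PW at' xt' y0 *
      (PX xt' * PW at' xt' y0 * (2:ℝ) ^ (q (at', xt')) / Sfun PX PW q at' y0) :=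
    mul_pos hy0 (div_pos htm hDpos)
  refine lt_of_lt_of_le hterm ?_
  apply Finset.single_le_sum (f := fun y => PW at' xt' y *
      (PX xt' * PW at' xt' y * (2:ℝ) ^ (q (at', xt')) / Sfun PX PW q at' y))
    (fun y _ => mul_nonneg (hPWnn xt' y) (div_nonneg
      (mul_nonneg (mul_nonneg (hPXpos xt').le (hPWnn xt' y)) h2.le)
      (Sfun_nonneg PX PW q at' y (fun x => (hPXpos x).le) (fun x => hPWnn x y))))
    (mem_univ y0)

lemma Hpd_eq_neg_cfun (PX : X → ℝ) (PW : A → X → Y → ℝ) (q : A × X → ℝ)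
    (at' : A) (xt' : X) (x' : X) :
    Hpd PX PW q at' xt' at' x' = -(cfun PX PW q at' xt' x') := by
  rw [Hpd, if_pos rfl, neg_one_mul]
  rfl

/-- For every `β ∈ (0,1)`, at every point `q` and for every component
`(ã,x̃)`, the absolute partial derivatives of `G_{ã|x̃}` sum to strictly less than `1`;
i.e., the `ℓ∞`-operator norm of the Jacobian of `G` is strictly less than `1`
everywhere. -/
theorem Gmap_jacobian_linf_norm_lt_one
    {X Y A : Type} [Fintype X] [Fintype Y] [Fintype A]
    [DecidableEq X] [DecidableEq Y] [DecidableEq A]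
    [Nonempty X] [Nonempty Y] [Nonempty A]
    (PX : X → ℝ) (PW : A → X → Y → ℝ) (μ : X → ℝ) (α : A → X → ℝ)
    (hPX : IsPMF PX) (hPXpos : ∀ x, 0 < PX x)
    (hPW : ∀ a x, IsPMF (PW a x))
    (hα : ∀ a x, 0 < α a x)
    (β : ℝ) (hβ₀ : 0 < β) (hβ₁ : β < 1) :
    ∀ (q : A × X → ℝ) (at' : A) (xt' : X),
      (∀ (a' : A) (x' : X),
        HasDerivAt
          (fun u : ℝ => Gmap PX PW μ α β (Function.update q (a', x') u) (at', xt'))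
          (Gpd PX PW β q at' xt' a' x') (q (a', x'))) ∧
      ∑ a', ∑ x', |Gpd PX PW β q at' xt' a' x'| < 1 := by
  intro q at' xt'
  have hPWnn : ∀ a x y, 0 ≤ PW a x y := fun a x y => (hPW a x).1 y
  constructor
  · intro a' x'
    have h1 : HasDerivAt (fun u : ℝ => β * Function.update q (a', x') u (at', xt'))
        (β * (if (at', xt') = (a', x') then (1:ℝ) else 0)) (q (a', x')) := by
      by_cases hp : (at', xt') = (a', x')
      · obtain ⟨ha, hx⟩ := Prod.mk.injEq .. ▸ hp
        subst ha; subst hx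
        simpa [Function.update_self] using (hasDerivAt_id (q (at', xt'))).const_mul β
      · simpa [Function.update_of_ne hp, hp] using
          hasDerivAt_const (q (a', x')) (β * q (at', xt'))
    by_cases hA : at' = a'
    · subst hA
      have h2 := (hasDerivAt_Hfun_update PX PW μ α q at' xt' x' hPXpos
        (fun x y => hPWnn at' x y) hα).const_mul (1 - β)
      have h3 := h1.add h2
      have heq : Gpd PX PW β q at' xt' at' x' =
          β * (if (at', xt') = (at', x') then (1:ℝ) else 0) +
            (1 - β) * -(∑ y, PW at' xt' y *
              (PX x' * PW at' x' y * (2:ℝ) ^ (q (at', x')) / Sfun PX PW q at' y)) := by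
        rw [Gpd, Hpd, if_pos rfl, neg_one_mul]
        rfl
      rw [heq]
      exact h3
    · have hupd : ∀ u : ℝ,
          Hfun PX PW μ α (Function.update q (a', x') u) at' xt' = Hfun PX PW μ α q at' xt' := by
        intro u
        have hpt : ∀ xt : X, Function.update q (a', x') u (at', xt) = q (at', xt) :=
          fun xt => Function.update_of_ne (fun h => hA (congrArg Prod.fst h)) _ _
        simp only [Hfun, hpt]
      have h2 : HasDerivAt
          (fun u : ℝ => (1 - β) * Hfun PX PW μ α (Function.update q (a', x') u) at' xt')
          0 (q (a', x')) := by
        have hfn : (fun u : ℝ => (1 - β) * Hfun PX PW μ α (Function.update q (a', x') u) at' xt')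
            = fun _ : ℝ => (1 - β) * Hfun PX PW μ α q at' xt' := funext fun u => by rw [hupd u]
        rw [hfn]
        exact hasDerivAt_const _ _
      have h3 := h1.add h2
      have heq : Gpd PX PW β q at' xt' a' x' =
          β * (if (at', xt') = (a', x') then (1:ℝ) else 0) + 0 := by
        rw [Gpd, Hpd, if_neg hA]
        ring
      rw [heq]
      exact h3
  · -- the bound
    have hc_nn : ∀ x'', 0 ≤ cfun PX PW q at' xt' x'' :=
      fun x'' => cfun_nonneg PX PW q at' xt' x'' hPXpos (fun x y => hPWnn at' x y)
    have hc_sum := cfun_sum_le_one PX PW q at' xt' hPXpos hPW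
    have hc_pos := cfun_pos PX PW q at' xt' hPXpos hPW
    have hrow : ∀ a', a' ≠ at' → ∑ x', |Gpd PX PW β q at' xt' a' x'| = 0 := by
      intro a' h
      apply Finset.sum_eq_zero
      intro x' _
      have : Gpd PX PW β q at' xt' a' x' = 0 := by
        rw [Gpd, Hpd, if_neg (Ne.symm h), if_neg (by
          simp only [ne_eq, Prod.mk.injEq, not_and]
          exact fun h' => absurd h' (Ne.symm h))]
        ring
      rw [this, abs_zero]
    rw [Finset.sum_eq_single at' (fun a' _ h => hrow a' h) (fun h => absurd (mem_univ at') h)]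
    have hGpd : ∀ x'', Gpd PX PW β q at' xt' at' x'' =
        β * (if xt' = x'' then (1:ℝ) else 0) - (1 - β) * cfun PX PW q at' xt' x'' := by
      intro x''
      rw [Gpd, Hpd_eq_neg_cfun]
      simp only [Prod.mk.injEq, true_and]
      ring
    have ht : 0 < (1 - β) * cfun PX PW q at' xt' xt' := mul_pos (by linarith) hc_pos
    calc ∑ x', |Gpd PX PW β q at' xt' at' x'|
        = |β - (1 - β) * cfun PX PW q at' xt' xt'| +
            ∑ x' ∈ univ.erase xt', (1 - β) * cfun PX PW q at' xt' x' := by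
          rw [← Finset.add_sum_erase univ (fun x' => |Gpd PX PW β q at' xt' at' x'|)
            (mem_univ xt')]
          congr 1
          · rw [hGpd, if_pos rfl, mul_one]
          · apply Finset.sum_congr rfl
            intro x' hx'
            rw [hGpd, if_neg (Ne.symm (Finset.mem_erase.mp hx').1), mul_zero, zero_sub,
              abs_neg, abs_of_nonneg (mul_nonneg (by linarith) (hc_nn x'))]
      _ = |β - (1 - β) * cfun PX PW q at' xt' xt'| +
            (1 - β) * (∑ x', cfun PX PW q at' xt' x' - cfun PX PW q at' xt' xt') := by
          rw [← Finset.mul_sum, Finset.sum_erase_eq_sub (mem_univ xt')]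
      _ < 1 := by
          have habs : |β - (1 - β) * cfun PX PW q at' xt' xt'| <
              β + (1 - β) * cfun PX PW q at' xt' xt' :=
            abs_sub_lt_iff.mpr ⟨by linarith, by linarith⟩
          have hmul : (1 - β) * (∑ x', cfun PX PW q at' xt' x' - cfun PX PW q at' xt' xt') ≤
              (1 - β) * (1 - cfun PX PW q at' xt' xt') :=
            mul_le_mul_of_nonneg_left (by linarith) (by linarith)
          have hexp : (1 - β) * (1 - cfun PX PW q at' xt' xt') =
              (1 - β) - (1 - β) * cfun PX PW q at' xt' xt' := by ring
          linarith
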